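/- Let A be an L-invariant subset of the Manhattan plane ℝ₁². Then the topological closure of A, regarded as a metric space with the metric induced from ℝ₁², is hyperconvex. -/

import Mathlib

open Set

/-- The taxicab (ℓ¹) distance on the plane, making `ℝ × ℝ` the Manhattan plane ℝ₁². -/
def taxiDist (p q : ℝ × ℝ) : ℝ := |p.1 - q.1| + |p.2 - q.2|

/-- Horizontal hatching `L_x(A)`. -/
def hatchX (A : Set (ℝ × ℝ)) : Set (ℝ × ℝ) :=
  {p | ∃ a ∈ A, ∃ b ∈ A, a.2 = p.2 ∧ b.2 = p.2 ∧ a.1 ≤ p.1 ∧ p.1 ≤ b.1}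

/-- Vertical hatching `L_y(A)`. -/
def hatchY (A : Set (ℝ × ℝ)) : Set (ℝ × ℝ) :=
  {p | ∃ a ∈ A, ∃ b ∈ A, a.1 = p.1 ∧ b.1 = p.1 ∧ a.2 ≤ p.2 ∧ p.2 ≤ b.2}

/-- Double hatching `L(A) = L_x(L_y(A))`. -/
def doubleHatch (A : Set (ℝ × ℝ)) : Set (ℝ × ℝ) := hatchX (hatchY A)

/-- A subset `S` of the Manhattan plane, regarded as a metric space with the induced
taxicab metric, is hyperconvex: for every family of points of `S` and nonnegative radii
with `d₁(x i, x j) ≤ r i + r j`, the closed balls (in `S`) have a common point. -/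
def TaxiHyperconvexOn (S : Set (ℝ × ℝ)) : Prop :=
  ∀ (I : Type) (x : I → ℝ × ℝ) (r : I → ℝ),
    (∀ i, x i ∈ S) → (∀ i, 0 ≤ r i) →
    (∀ i j, taxiDist (x i) (x j) ≤ r i + r j) →
    ∃ y ∈ S, ∀ i, taxiDist (x i) y ≤ r i

namespace LInvProof

open Filter Topology

lemma slice_vert {B : Set (ℝ×ℝ)} (hY : hatchY B ⊆ B) (x₀ : ℝ) :
    IsPreconnected (B ∩ {p | p.1 = x₀}) := by
  have himg : B ∩ {p : ℝ×ℝ | p.1 = x₀} =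
      (fun s : ℝ => ((x₀ : ℝ), s)) '' {s : ℝ | ((x₀ : ℝ), s) ∈ B} := by
    ext p
    constructor
    · rintro ⟨hpB, hpx⟩
      have hpe : ((x₀:ℝ), p.2) = p := by
        cases p; simp_all
      exact ⟨p.2, hpe ▸ hpB, hpe⟩
    · rintro ⟨s, hs, rfl⟩; exact ⟨hs, rfl⟩
  rw [himg]
  have hJ : ({s : ℝ | ((x₀ : ℝ), s) ∈ B} : Set ℝ).OrdConnected := by
    refine ⟨fun y1 hy1 y2 hy2 y hy => ?_⟩
    exact hY ⟨(x₀, y1), hy1, (x₀, y2), hy2, rfl, rfl, hy.1, hy.2⟩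
  exact hJ.isPreconnected.image _ (Continuous.continuousOn (by fun_prop))

lemma slice_horiz {B : Set (ℝ×ℝ)} (hX : hatchX B ⊆ B) (y₀ : ℝ) :
    IsPreconnected (B ∩ {p | p.2 = y₀}) := by
  have himg : B ∩ {p : ℝ×ℝ | p.2 = y₀} =
      (fun s : ℝ => (s, (y₀ : ℝ))) '' {s : ℝ | ((s, (y₀ : ℝ)) : ℝ×ℝ) ∈ B} := by
    ext p
    constructor
    · rintro ⟨hpB, hpy⟩
      have hpe : ((p.1, (y₀:ℝ)) : ℝ×ℝ) = p := by cases p; simp_all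
      exact ⟨p.1, hpe ▸ hpB, hpe⟩
    · rintro ⟨s, hs, rfl⟩; exact ⟨hs, rfl⟩
  rw [himg]
  have hJ : ({s : ℝ | ((s, (y₀ : ℝ)) : ℝ×ℝ) ∈ B} : Set ℝ).OrdConnected := by
    refine ⟨fun y1 hy1 y2 hy2 y hy => ?_⟩
    exact hX ⟨(y1, y₀), hy1, (y2, y₀), hy2, rfl, rfl, hy.1, hy.2⟩
  exact hJ.isPreconnected.image _ (Continuous.continuousOn (by fun_prop))

-- main-case helper for "x ≥ x₀" cut, with the boundary line inside U
lemma cut_main_x_ge {B U V : Set (ℝ×ℝ)} (hB : IsPreconnected B) (x₀ : ℝ)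
    (hU : IsOpen U) (hV : IsOpen V)
    (hsub : B ∩ {p | x₀ ≤ p.1} ⊆ U ∪ V)
    (hLU : ∀ p ∈ B, p.1 = x₀ → p ∈ U)
    (hSU : (B ∩ {p | x₀ ≤ p.1} ∩ U).Nonempty)
    (hSV : (B ∩ {p | x₀ ≤ p.1} ∩ V).Nonempty) :
    (B ∩ {p | x₀ ≤ p.1} ∩ (U ∩ V)).Nonempty := by
  obtain ⟨w, ⟨hwB, hwx⟩, hwV⟩ := hSV
  rcases eq_or_lt_of_le (show x₀ ≤ w.1 from hwx) with heq | hlt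
  · exact ⟨w, ⟨hwB, hwx⟩, hLU w hwB heq.symm, hwV⟩
  · have hopen1 : IsOpen (U ∪ {p : ℝ×ℝ | p.1 < x₀}) :=
      hU.union (isOpen_Iio.preimage continuous_fst)
    have hopen2 : IsOpen (V ∩ {p : ℝ×ℝ | x₀ < p.1}) :=
      hV.inter (isOpen_Ioi.preimage continuous_fst)
    have hcov : B ⊆ (U ∪ {p : ℝ×ℝ | p.1 < x₀}) ∪ (V ∩ {p : ℝ×ℝ | x₀ < p.1}) := by
      intro q hq
      rcases lt_trichotomy q.1 x₀ with h | h | h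
      · exact Or.inl (Or.inr h)
      · exact Or.inl (Or.inl (hLU q hq h))
      · rcases hsub ⟨hq, le_of_lt h⟩ with hqU | hqV
        · exact Or.inl (Or.inl hqU)
        · exact Or.inr ⟨hqV, h⟩
    obtain ⟨w', hw'⟩ := hSU
    have h1 : (B ∩ (U ∪ {p : ℝ×ℝ | p.1 < x₀})).Nonempty := ⟨w', hw'.1.1, Or.inl hw'.2⟩
    have h2 : (B ∩ (V ∩ {p : ℝ×ℝ | x₀ < p.1})).Nonempty := ⟨w, hwB, hwV, hlt⟩
    obtain ⟨t, htB, ht1, ht2⟩ := hB _ _ hopen1 hopen2 hcov h1 h2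
    rcases ht1 with htU | htlt
    · exact ⟨t, ⟨⟨htB, show x₀ ≤ t.1 from le_of_lt ht2.2⟩, htU, ht2.1⟩⟩
    · exact absurd (show x₀ < t.1 from ht2.2) (not_lt.mpr (le_of_lt (show t.1 < x₀ from htlt)))

lemma cut_x_ge {B : Set (ℝ×ℝ)} (hY : hatchY B ⊆ B) (hB : IsPreconnected B) (x₀ : ℝ) :
    IsPreconnected (B ∩ {p | x₀ ≤ p.1}) := by
  intro U V hU hV hsub hSU hSV
  by_cases hLV : ((B ∩ {p | p.1 = x₀}) ∩ V).Nonempty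
  · by_cases hLU : ((B ∩ {p | p.1 = x₀}) ∩ U).Nonempty
    · have hLS : B ∩ {p | p.1 = x₀} ⊆ B ∩ {p | x₀ ≤ p.1} :=
        fun p hp => ⟨hp.1, le_of_eq hp.2.symm⟩
      obtain ⟨w, hwL, hwUV⟩ := slice_vert hY x₀ U V hU hV (hLS.trans hsub) hLU hLV
      exact ⟨w, hLS hwL, hwUV⟩
    · -- boundary line inside V
      have hLV' : ∀ p ∈ B, p.1 = x₀ → p ∈ V := by
        intro p hpB hpx
        have hpS : p ∈ B ∩ {p | x₀ ≤ p.1} := ⟨hpB, le_of_eq hpx.symm⟩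
        rcases hsub hpS with h | h
        · exact absurd ⟨p, ⟨hpB, hpx⟩, h⟩ hLU
        · exact h
      obtain ⟨t, htS, htV, htU⟩ :=
        cut_main_x_ge hB x₀ hV hU (hsub.trans (union_comm U V ▸ le_refl _)) hLV' hSV hSU
      exact ⟨t, htS, htU, htV⟩
  · have hLU' : ∀ p ∈ B, p.1 = x₀ → p ∈ U := by
      intro p hpB hpx
      have hpS : p ∈ B ∩ {p | x₀ ≤ p.1} := ⟨hpB, le_of_eq hpx.symm⟩
      rcases hsub hpS with h | h
      · exact h
      · exact absurd ⟨p, ⟨hpB, hpx⟩, h⟩ hLV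
    exact cut_main_x_ge hB x₀ hU hV hsub hLU' hSU hSV

lemma cut_main_x_le {B U V : Set (ℝ×ℝ)} (hB : IsPreconnected B) (x₀ : ℝ)
    (hU : IsOpen U) (hV : IsOpen V)
    (hsub : B ∩ {p | p.1 ≤ x₀} ⊆ U ∪ V)
    (hLU : ∀ p ∈ B, p.1 = x₀ → p ∈ U)
    (hSU : (B ∩ {p | p.1 ≤ x₀} ∩ U).Nonempty)
    (hSV : (B ∩ {p | p.1 ≤ x₀} ∩ V).Nonempty) :
    (B ∩ {p | p.1 ≤ x₀} ∩ (U ∩ V)).Nonempty := by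
  obtain ⟨w, ⟨hwB, hwx⟩, hwV⟩ := hSV
  rcases eq_or_lt_of_le (show w.1 ≤ x₀ from hwx) with heq | hlt
  · exact ⟨w, ⟨hwB, hwx⟩, hLU w hwB heq, hwV⟩
  · have hopen1 : IsOpen (U ∪ {p : ℝ×ℝ | x₀ < p.1}) :=
      hU.union (isOpen_Ioi.preimage continuous_fst)
    have hopen2 : IsOpen (V ∩ {p : ℝ×ℝ | p.1 < x₀}) :=
      hV.inter (isOpen_Iio.preimage continuous_fst)
    have hcov : B ⊆ (U ∪ {p : ℝ×ℝ | x₀ < p.1}) ∪ (V ∩ {p : ℝ×ℝ | p.1 < x₀}) := by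
      intro q hq
      rcases lt_trichotomy q.1 x₀ with h | h | h
      · rcases hsub ⟨hq, le_of_lt h⟩ with hqU | hqV
        · exact Or.inl (Or.inl hqU)
        · exact Or.inr ⟨hqV, h⟩
      · exact Or.inl (Or.inl (hLU q hq h))
      · exact Or.inl (Or.inr h)
    obtain ⟨w', hw'⟩ := hSU
    have h1 : (B ∩ (U ∪ {p : ℝ×ℝ | x₀ < p.1})).Nonempty := ⟨w', hw'.1.1, Or.inl hw'.2⟩
    have h2 : (B ∩ (V ∩ {p : ℝ×ℝ | p.1 < x₀})).Nonempty := ⟨w, hwB, hwV, hlt⟩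
    obtain ⟨t, htB, ht1, ht2⟩ := hB _ _ hopen1 hopen2 hcov h1 h2
    rcases ht1 with htU | htlt
    · exact ⟨t, ⟨⟨htB, show t.1 ≤ x₀ from le_of_lt ht2.2⟩, htU, ht2.1⟩⟩
    · exact absurd (show t.1 < x₀ from ht2.2) (not_lt.mpr (le_of_lt (show x₀ < t.1 from htlt)))

lemma cut_x_le {B : Set (ℝ×ℝ)} (hY : hatchY B ⊆ B) (hB : IsPreconnected B) (x₀ : ℝ) :
    IsPreconnected (B ∩ {p | p.1 ≤ x₀}) := by
  intro U V hU hV hsub hSU hSV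
  by_cases hLV : ((B ∩ {p | p.1 = x₀}) ∩ V).Nonempty
  · by_cases hLU : ((B ∩ {p | p.1 = x₀}) ∩ U).Nonempty
    · have hLS : B ∩ {p | p.1 = x₀} ⊆ B ∩ {p | p.1 ≤ x₀} :=
        fun p hp => ⟨hp.1, le_of_eq hp.2⟩
      obtain ⟨w, hwL, hwUV⟩ := slice_vert hY x₀ U V hU hV (hLS.trans hsub) hLU hLV
      exact ⟨w, hLS hwL, hwUV⟩
    · have hLV' : ∀ p ∈ B, p.1 = x₀ → p ∈ V := by
        intro p hpB hpx
        have hpS : p ∈ B ∩ {p | p.1 ≤ x₀} := ⟨hpB, le_of_eq hpx⟩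
        rcases hsub hpS with h | h
        · exact absurd ⟨p, ⟨hpB, hpx⟩, h⟩ hLU
        · exact h
      obtain ⟨t, htS, htV, htU⟩ :=
        cut_main_x_le hB x₀ hV hU (hsub.trans (union_comm U V ▸ le_refl _)) hLV' hSV hSU
      exact ⟨t, htS, htU, htV⟩
  · have hLU' : ∀ p ∈ B, p.1 = x₀ → p ∈ U := by
      intro p hpB hpx
      have hpS : p ∈ B ∩ {p | p.1 ≤ x₀} := ⟨hpB, le_of_eq hpx⟩
      rcases hsub hpS with h | h
      · exact h
      · exact absurd ⟨p, ⟨hpB, hpx⟩, h⟩ hLV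
    exact cut_main_x_le hB x₀ hU hV hsub hLU' hSU hSV

lemma cut_main_y_ge {B U V : Set (ℝ×ℝ)} (hB : IsPreconnected B) (y₀ : ℝ)
    (hU : IsOpen U) (hV : IsOpen V)
    (hsub : B ∩ {p | y₀ ≤ p.2} ⊆ U ∪ V)
    (hLU : ∀ p ∈ B, p.2 = y₀ → p ∈ U)
    (hSU : (B ∩ {p | y₀ ≤ p.2} ∩ U).Nonempty)
    (hSV : (B ∩ {p | y₀ ≤ p.2} ∩ V).Nonempty) :
    (B ∩ {p | y₀ ≤ p.2} ∩ (U ∩ V)).Nonempty := by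
  obtain ⟨w, ⟨hwB, hwx⟩, hwV⟩ := hSV
  rcases eq_or_lt_of_le (show y₀ ≤ w.2 from hwx) with heq | hlt
  · exact ⟨w, ⟨hwB, hwx⟩, hLU w hwB heq.symm, hwV⟩
  · have hopen1 : IsOpen (U ∪ {p : ℝ×ℝ | p.2 < y₀}) :=
      hU.union (isOpen_Iio.preimage continuous_snd)
    have hopen2 : IsOpen (V ∩ {p : ℝ×ℝ | y₀ < p.2}) :=
      hV.inter (isOpen_Ioi.preimage continuous_snd)
    have hcov : B ⊆ (U ∪ {p : ℝ×ℝ | p.2 < y₀}) ∪ (V ∩ {p : ℝ×ℝ | y₀ < p.2}) := by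
      intro q hq
      rcases lt_trichotomy q.2 y₀ with h | h | h
      · exact Or.inl (Or.inr h)
      · exact Or.inl (Or.inl (hLU q hq h))
      · rcases hsub ⟨hq, le_of_lt h⟩ with hqU | hqV
        · exact Or.inl (Or.inl hqU)
        · exact Or.inr ⟨hqV, h⟩
    obtain ⟨w', hw'⟩ := hSU
    have h1 : (B ∩ (U ∪ {p : ℝ×ℝ | p.2 < y₀})).Nonempty := ⟨w', hw'.1.1, Or.inl hw'.2⟩
    have h2 : (B ∩ (V ∩ {p : ℝ×ℝ | y₀ < p.2})).Nonempty := ⟨w, hwB, hwV, hlt⟩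
    obtain ⟨t, htB, ht1, ht2⟩ := hB _ _ hopen1 hopen2 hcov h1 h2
    rcases ht1 with htU | htlt
    · exact ⟨t, ⟨⟨htB, show y₀ ≤ t.2 from le_of_lt ht2.2⟩, htU, ht2.1⟩⟩
    · exact absurd (show y₀ < t.2 from ht2.2) (not_lt.mpr (le_of_lt (show t.2 < y₀ from htlt)))

lemma cut_y_ge {B : Set (ℝ×ℝ)} (hX : hatchX B ⊆ B) (hB : IsPreconnected B) (y₀ : ℝ) :
    IsPreconnected (B ∩ {p | y₀ ≤ p.2}) := by
  intro U V hU hV hsub hSU hSV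
  by_cases hLV : ((B ∩ {p | p.2 = y₀}) ∩ V).Nonempty
  · by_cases hLU : ((B ∩ {p | p.2 = y₀}) ∩ U).Nonempty
    · have hLS : B ∩ {p | p.2 = y₀} ⊆ B ∩ {p | y₀ ≤ p.2} :=
        fun p hp => ⟨hp.1, le_of_eq hp.2.symm⟩
      obtain ⟨w, hwL, hwUV⟩ := slice_horiz hX y₀ U V hU hV (hLS.trans hsub) hLU hLV
      exact ⟨w, hLS hwL, hwUV⟩
    · have hLV' : ∀ p ∈ B, p.2 = y₀ → p ∈ V := by
        intro p hpB hpx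
        have hpS : p ∈ B ∩ {p | y₀ ≤ p.2} := ⟨hpB, le_of_eq hpx.symm⟩
        rcases hsub hpS with h | h
        · exact absurd ⟨p, ⟨hpB, hpx⟩, h⟩ hLU
        · exact h
      obtain ⟨t, htS, htV, htU⟩ :=
        cut_main_y_ge hB y₀ hV hU (hsub.trans (union_comm U V ▸ le_refl _)) hLV' hSV hSU
      exact ⟨t, htS, htU, htV⟩
  · have hLU' : ∀ p ∈ B, p.2 = y₀ → p ∈ U := by
      intro p hpB hpx
      have hpS : p ∈ B ∩ {p | y₀ ≤ p.2} := ⟨hpB, le_of_eq hpx.symm⟩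
      rcases hsub hpS with h | h
      · exact h
      · exact absurd ⟨p, ⟨hpB, hpx⟩, h⟩ hLV
    exact cut_main_y_ge hB y₀ hU hV hsub hLU' hSU hSV

lemma cut_main_y_le {B U V : Set (ℝ×ℝ)} (hB : IsPreconnected B) (y₀ : ℝ)
    (hU : IsOpen U) (hV : IsOpen V)
    (hsub : B ∩ {p | p.2 ≤ y₀} ⊆ U ∪ V)
    (hLU : ∀ p ∈ B, p.2 = y₀ → p ∈ U)
    (hSU : (B ∩ {p | p.2 ≤ y₀} ∩ U).Nonempty)
    (hSV : (B ∩ {p | p.2 ≤ y₀} ∩ V).Nonempty) :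
    (B ∩ {p | p.2 ≤ y₀} ∩ (U ∩ V)).Nonempty := by
  obtain ⟨w, ⟨hwB, hwx⟩, hwV⟩ := hSV
  rcases eq_or_lt_of_le (show w.2 ≤ y₀ from hwx) with heq | hlt
  · exact ⟨w, ⟨hwB, hwx⟩, hLU w hwB heq, hwV⟩
  · have hopen1 : IsOpen (U ∪ {p : ℝ×ℝ | y₀ < p.2}) :=
      hU.union (isOpen_Ioi.preimage continuous_snd)
    have hopen2 : IsOpen (V ∩ {p : ℝ×ℝ | p.2 < y₀}) :=
      hV.inter (isOpen_Iio.preimage continuous_snd)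
    have hcov : B ⊆ (U ∪ {p : ℝ×ℝ | y₀ < p.2}) ∪ (V ∩ {p : ℝ×ℝ | p.2 < y₀}) := by
      intro q hq
      rcases lt_trichotomy q.2 y₀ with h | h | h
      · rcases hsub ⟨hq, le_of_lt h⟩ with hqU | hqV
        · exact Or.inl (Or.inl hqU)
        · exact Or.inr ⟨hqV, h⟩
      · exact Or.inl (Or.inl (hLU q hq h))
      · exact Or.inl (Or.inr h)
    obtain ⟨w', hw'⟩ := hSU
    have h1 : (B ∩ (U ∪ {p : ℝ×ℝ | y₀ < p.2})).Nonempty := ⟨w', hw'.1.1, Or.inl hw'.2⟩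
    have h2 : (B ∩ (V ∩ {p : ℝ×ℝ | p.2 < y₀})).Nonempty := ⟨w, hwB, hwV, hlt⟩
    obtain ⟨t, htB, ht1, ht2⟩ := hB _ _ hopen1 hopen2 hcov h1 h2
    rcases ht1 with htU | htlt
    · exact ⟨t, ⟨⟨htB, show t.2 ≤ y₀ from le_of_lt ht2.2⟩, htU, ht2.1⟩⟩
    · exact absurd (show t.2 < y₀ from ht2.2) (not_lt.mpr (le_of_lt (show y₀ < t.2 from htlt)))

lemma cut_y_le {B : Set (ℝ×ℝ)} (hX : hatchX B ⊆ B) (hB : IsPreconnected B) (y₀ : ℝ) :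
    IsPreconnected (B ∩ {p | p.2 ≤ y₀}) := by
  intro U V hU hV hsub hSU hSV
  by_cases hLV : ((B ∩ {p | p.2 = y₀}) ∩ V).Nonempty
  · by_cases hLU : ((B ∩ {p | p.2 = y₀}) ∩ U).Nonempty
    · have hLS : B ∩ {p | p.2 = y₀} ⊆ B ∩ {p | p.2 ≤ y₀} :=
        fun p hp => ⟨hp.1, le_of_eq hp.2⟩
      obtain ⟨w, hwL, hwUV⟩ := slice_horiz hX y₀ U V hU hV (hLS.trans hsub) hLU hLV
      exact ⟨w, hLS hwL, hwUV⟩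
    · have hLV' : ∀ p ∈ B, p.2 = y₀ → p ∈ V := by
        intro p hpB hpx
        have hpS : p ∈ B ∩ {p | p.2 ≤ y₀} := ⟨hpB, le_of_eq hpx⟩
        rcases hsub hpS with h | h
        · exact absurd ⟨p, ⟨hpB, hpx⟩, h⟩ hLU
        · exact h
      obtain ⟨t, htS, htV, htU⟩ :=
        cut_main_y_le hB y₀ hV hU (hsub.trans (union_comm U V ▸ le_refl _)) hLV' hSV hSU
      exact ⟨t, htS, htU, htV⟩
  · have hLU' : ∀ p ∈ B, p.2 = y₀ → p ∈ U := by
      intro p hpB hpx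
      have hpS : p ∈ B ∩ {p | p.2 ≤ y₀} := ⟨hpB, le_of_eq hpx⟩
      rcases hsub hpS with h | h
      · exact h
      · exact absurd ⟨p, ⟨hpB, hpx⟩, h⟩ hLV
    exact cut_main_y_le hB y₀ hU hV hsub hLU' hSU hSV

def Ortho (B : Set (ℝ×ℝ)) : Prop := hatchX B ⊆ B ∧ hatchY B ⊆ B ∧ IsPreconnected B

section OrthoCut
variable {B : Set (ℝ×ℝ)}

lemma Ortho.cut_x_ge' (h : Ortho B) (x₀ : ℝ) : Ortho (B ∩ {p | x₀ ≤ p.1}) := by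
  refine ⟨?_, ?_, cut_x_ge h.2.1 h.2.2 x₀⟩
  · rintro p ⟨a, ⟨haB, hax⟩, b, ⟨hbB, hbx⟩, h1, h2, h3, h4⟩
    exact ⟨h.1 ⟨a, haB, b, hbB, h1, h2, h3, h4⟩, le_trans hax h3⟩
  · rintro p ⟨a, ⟨haB, hax⟩, b, ⟨hbB, hbx⟩, h1, h2, h3, h4⟩
    exact ⟨h.2.1 ⟨a, haB, b, hbB, h1, h2, h3, h4⟩, show x₀ ≤ p.1 by rw [← h1]; exact hax⟩

lemma Ortho.cut_x_le' (h : Ortho B) (x₀ : ℝ) : Ortho (B ∩ {p | p.1 ≤ x₀}) := by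
  refine ⟨?_, ?_, cut_x_le h.2.1 h.2.2 x₀⟩
  · rintro p ⟨a, ⟨haB, hax⟩, b, ⟨hbB, hbx⟩, h1, h2, h3, h4⟩
    exact ⟨h.1 ⟨a, haB, b, hbB, h1, h2, h3, h4⟩, le_trans h4 hbx⟩
  · rintro p ⟨a, ⟨haB, hax⟩, b, ⟨hbB, hbx⟩, h1, h2, h3, h4⟩
    exact ⟨h.2.1 ⟨a, haB, b, hbB, h1, h2, h3, h4⟩, show p.1 ≤ x₀ by rw [← h1]; exact hax⟩

lemma Ortho.cut_y_ge' (h : Ortho B) (y₀ : ℝ) : Ortho (B ∩ {p | y₀ ≤ p.2}) := by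
  refine ⟨?_, ?_, cut_y_ge h.1 h.2.2 y₀⟩
  · rintro p ⟨a, ⟨haB, hax⟩, b, ⟨hbB, hbx⟩, h1, h2, h3, h4⟩
    exact ⟨h.1 ⟨a, haB, b, hbB, h1, h2, h3, h4⟩, show y₀ ≤ p.2 by rw [← h1]; exact hax⟩
  · rintro p ⟨a, ⟨haB, hax⟩, b, ⟨hbB, hbx⟩, h1, h2, h3, h4⟩
    exact ⟨h.2.1 ⟨a, haB, b, hbB, h1, h2, h3, h4⟩, le_trans hax h3⟩

lemma Ortho.cut_y_le' (h : Ortho B) (y₀ : ℝ) : Ortho (B ∩ {p | p.2 ≤ y₀}) := by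
  refine ⟨?_, ?_, cut_y_le h.1 h.2.2 y₀⟩
  · rintro p ⟨a, ⟨haB, hax⟩, b, ⟨hbB, hbx⟩, h1, h2, h3, h4⟩
    exact ⟨h.1 ⟨a, haB, b, hbB, h1, h2, h3, h4⟩, show p.2 ≤ y₀ by rw [← h1]; exact hax⟩
  · rintro p ⟨a, ⟨haB, hax⟩, b, ⟨hbB, hbx⟩, h1, h2, h3, h4⟩
    exact ⟨h.2.1 ⟨a, haB, b, hbB, h1, h2, h3, h4⟩, le_trans h4 hbx⟩

end OrthoCut

lemma ivt' {B : Set (ℝ×ℝ)} (hB : IsPreconnected B) {f : ℝ×ℝ → ℝ} (hf : Continuous f)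
    {p q : ℝ×ℝ} (hp : p ∈ B) (hq : q ∈ B) {c : ℝ}
    (h1 : min (f p) (f q) ≤ c) (h2 : c ≤ max (f p) (f q)) :
    ∃ z ∈ B, f z = c := by
  rcases le_total (f p) (f q) with h | h
  · obtain ⟨z, hz, hz'⟩ := hB.intermediate_value hp hq hf.continuousOn
      (⟨by rwa [min_eq_left h] at h1, by rwa [max_eq_right h] at h2⟩ : c ∈ Icc (f p) (f q))
    exact ⟨z, hz, hz'⟩
  · obtain ⟨z, hz, hz'⟩ := hB.intermediate_value hq hp hf.continuousOn
      (⟨by rwa [min_eq_right h] at h1, by rwa [max_eq_left h] at h2⟩ : c ∈ Icc (f q) (f p))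
    exact ⟨z, hz, hz'⟩

lemma clamp {a b X ε : ℝ} (hε : 0 ≤ ε) (ha : a ≤ X + ε) (hb : X - ε ≤ b) :
    ∃ t, min a b ≤ t ∧ t ≤ max a b ∧ X - ε ≤ t ∧ t ≤ X + ε := by
  refine ⟨max a (min b X), ?_, ?_, ?_, ?_⟩
  · exact le_trans (min_le_left _ _) (le_max_left _ _)
  · exact max_le (le_max_left _ _) (le_trans (min_le_left _ _) (le_max_right _ _))
  · exact le_trans (le_min hb (by linarith)) (le_max_right _ _)
  · exact max_le ha (le_trans (min_le_right _ _) (by linarith))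

def negP (p : ℝ×ℝ) : ℝ×ℝ := (-p.1, -p.2)
def rotP (p : ℝ×ℝ) : ℝ×ℝ := (-p.2, p.1)

lemma Ortho.neg {B : Set (ℝ×ℝ)} (h : Ortho B) : Ortho (negP '' B) := by
  refine ⟨?_, ?_, h.2.2.image _ (Continuous.continuousOn (by unfold negP; fun_prop))⟩
  · rintro q ⟨a', ⟨a, haB, rfl⟩, b', ⟨b, hbB, rfl⟩, h1, h2, h3, h4⟩
    have : negP q ∈ B := h.1 ⟨b, hbB, a, haB, by simp [negP] at h2 ⊢; linarith,
      by simp [negP] at h1 ⊢; linarith, by simp [negP] at h4 ⊢; linarith,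
      by simp [negP] at h3 ⊢; linarith⟩
    exact ⟨negP q, this, by simp [negP]⟩
  · rintro q ⟨a', ⟨a, haB, rfl⟩, b', ⟨b, hbB, rfl⟩, h1, h2, h3, h4⟩
    have : negP q ∈ B := h.2.1 ⟨b, hbB, a, haB, by simp [negP] at h2 ⊢; linarith,
      by simp [negP] at h1 ⊢; linarith, by simp [negP] at h4 ⊢; linarith,
      by simp [negP] at h3 ⊢; linarith⟩
    exact ⟨negP q, this, by simp [negP]⟩

lemma Ortho.rot {B : Set (ℝ×ℝ)} (h : Ortho B) : Ortho (rotP '' B) := by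
  refine ⟨?_, ?_, h.2.2.image _ (Continuous.continuousOn (by unfold rotP; fun_prop))⟩
  · -- hatchX (rotP '' B): witnesses a' = rotP a, b' = rotP b with a'.2 = q.2 i.e. a.1 = q.2
    rintro q ⟨a', ⟨a, haB, rfl⟩, b', ⟨b, hbB, rfl⟩, h1, h2, h3, h4⟩
    have hw : ((q.2, -q.1) : ℝ×ℝ) ∈ B := h.2.1 ⟨b, hbB, a, haB,
      by simp [rotP] at h2 ⊢; linarith, by simp [rotP] at h1 ⊢; linarith,
      by simp [rotP] at h4 ⊢; linarith, by simp [rotP] at h3 ⊢; linarith⟩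
    exact ⟨(q.2, -q.1), hw, by simp [rotP]⟩
  · rintro q ⟨a', ⟨a, haB, rfl⟩, b', ⟨b, hbB, rfl⟩, h1, h2, h3, h4⟩
    have hw : ((q.2, -q.1) : ℝ×ℝ) ∈ B := h.1 ⟨a, haB, b, hbB,
      by simp [rotP] at h1 ⊢; linarith, by simp [rotP] at h2 ⊢; linarith,
      by simp [rotP] at h3 ⊢; linarith, by simp [rotP] at h4 ⊢; linarith⟩
    exact ⟨(q.2, -q.1), hw, by simp [rotP]⟩

/-- Branch: there is a point `p` of `A` in the lower-left region. -/
lemma branchB {A : Set (ℝ×ℝ)} (hO : Ortho A) {α β γ δ ε : ℝ}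
    (hαβ : α ≤ β) (hγδ : γ ≤ δ) (hε : 0 ≤ ε) (wide : δ - γ ≤ β - α)
    {a c d p : ℝ×ℝ} (haA : a ∈ A) (hcA : c ∈ A) (hdA : d ∈ A) (hpA : p ∈ A)
    (ha1 : (α+δ)/2 - ε ≤ a.1) (ha2 : (α-γ)/2 - ε ≤ a.2)
    (hc1 : (β+γ)/2 - ε ≤ c.1) (hc2 : c.2 ≤ (α-γ)/2 + ε)
    (hd1 : d.1 ≤ (α+δ)/2 + ε) (hd2 : (β-δ)/2 - ε ≤ d.2)
    (hp1 : p.1 ≤ (α+δ)/2 + ε) (hp2 : p.2 ≤ (α-γ)/2 + (δ-γ)/2 + 2*ε) :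
    ∃ z ∈ A, α - 3*ε ≤ z.1 + z.2 ∧ z.1 + z.2 ≤ β + 3*ε ∧
      γ - 3*ε ≤ z.1 - z.2 ∧ z.1 - z.2 ≤ δ + 3*ε := by
  -- cut C : y ≤ yW + S' + 2ε
  have hOC := hO.cut_y_le' ((α-γ)/2 + (δ-γ)/2 + 2*ε)
  have hpC : p ∈ A ∩ {q | q.2 ≤ (α-γ)/2 + (δ-γ)/2 + 2*ε} := ⟨hpA, hp2⟩
  have hcC : c ∈ A ∩ {q | q.2 ≤ (α-γ)/2 + (δ-γ)/2 + 2*ε} :=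
    ⟨hcA, show c.2 ≤ _ by linarith⟩
  obtain ⟨t₁, ht₁a, ht₁b, ht₁c, ht₁d⟩ :=
    clamp (X := (α+δ)/2) hε hp1 (show (α+δ)/2 - ε ≤ c.1 by linarith)
  obtain ⟨e, ⟨heA, he2⟩, he1⟩ := ivt' hOC.2.2 continuous_fst hpC hcC ht₁a ht₁b
  -- cut D : y ≥ yS − ε
  have hOD := hO.cut_y_ge' ((α-δ)/2 - ε)
  have hdD : d ∈ A ∩ {q | (α-δ)/2 - ε ≤ q.2} := ⟨hdA, show _ ≤ d.2 by linarith⟩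
  have haD : a ∈ A ∩ {q | (α-δ)/2 - ε ≤ q.2} := ⟨haA, show _ ≤ a.2 by linarith⟩
  obtain ⟨t₂, ht₂a, ht₂b, ht₂c, ht₂d⟩ := clamp (X := (α+δ)/2) hε hd1 ha1
  obtain ⟨f, ⟨hfA, hf2⟩, hf1⟩ := ivt' hOD.2.2 continuous_fst hdD haD ht₂a ht₂b
  simp only [mem_setOf_eq] at he2 hf2
  by_cases he' : (α-δ)/2 - ε ≤ e.2
  · exact ⟨e, heA, by rw [he1]; constructor; · linarith
                      constructor; · linarith
                      constructor; · linarith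
                      · linarith⟩
  · push_neg at he'
    have hOE := (hO.cut_x_ge' ((α+δ)/2 - ε)).cut_x_le' ((α+δ)/2 + ε)
    have heE : e ∈ A ∩ {q | (α+δ)/2 - ε ≤ q.1} ∩ {q | q.1 ≤ (α+δ)/2 + ε} :=
      ⟨⟨heA, show _ ≤ e.1 by rw [he1]; linarith⟩,
        show e.1 ≤ _ by rw [he1]; linarith⟩
    have hfE : f ∈ A ∩ {q | (α+δ)/2 - ε ≤ q.1} ∩ {q | q.1 ≤ (α+δ)/2 + ε} :=
      ⟨⟨hfA, show _ ≤ f.1 by rw [hf1]; linarith⟩,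
        show f.1 ≤ _ by rw [hf1]; linarith⟩
    obtain ⟨z, ⟨⟨hzA, hz1⟩, hz2⟩, hz3⟩ := ivt' hOE.2.2 continuous_snd heE hfE
      (c := (α-δ)/2 - ε) (le_trans (min_le_left _ _) (le_of_lt he'))
      (le_trans hf2 (le_max_right _ _))
    simp only [mem_setOf_eq] at hz1 hz2
    exact ⟨z, hzA, by rw [hz3]; constructor; · linarith
                      constructor; · linarith
                      constructor; · linarith
                      · linarith⟩

lemma core {A : Set (ℝ×ℝ)} (hO : Ortho A) {α β γ δ ε : ℝ}
    (hαβ : α ≤ β) (hγδ : γ ≤ δ) (hε : 0 ≤ ε) (wide : δ - γ ≤ β - α)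
    {a b c d : ℝ×ℝ} (haA : a ∈ A) (hbA : b ∈ A) (hcA : c ∈ A) (hdA : d ∈ A)
    (ha1 : (α+δ)/2 - ε ≤ a.1) (ha2 : (α-γ)/2 - ε ≤ a.2)
    (hb1 : b.1 ≤ (β+γ)/2 + ε) (hb2 : b.2 ≤ (β-δ)/2 + ε)
    (hc1 : (β+γ)/2 - ε ≤ c.1) (hc2 : c.2 ≤ (α-γ)/2 + ε)
    (hd1 : d.1 ≤ (α+δ)/2 + ε) (hd2 : (β-δ)/2 - ε ≤ d.2) :
    ∃ z ∈ A, α - 3*ε ≤ z.1 + z.2 ∧ z.1 + z.2 ≤ β + 3*ε ∧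
      γ - 3*ε ≤ z.1 - z.2 ∧ z.1 - z.2 ≤ δ + 3*ε := by
  by_cases H1 : ∃ p ∈ A, p.1 ≤ (α+δ)/2 + ε ∧ p.2 ≤ (α-γ)/2 + (δ-γ)/2 + 2*ε
  · obtain ⟨p, hpA, hp1, hp2⟩ := H1
    exact branchB hO hαβ hγδ hε wide haA hcA hdA hpA ha1 ha2 hc1 hc2 hd1 hd2 hp1 hp2
  by_cases H2 : ∃ p ∈ A, (β+γ)/2 - ε ≤ p.1 ∧ (β-δ)/2 - (δ-γ)/2 - 2*ε ≤ p.2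
  · obtain ⟨p, hpA, hp1, hp2⟩ := H2
    have hO' := hO.neg
    have hres := branchB (α := -β) (β := -α) (γ := -δ) (δ := -γ) (ε := ε) hO'
      (by linarith) (by linarith) hε (by linarith)
      (a := negP b) (c := negP d) (d := negP c) (p := negP p)
      (mem_image_of_mem _ hbA) (mem_image_of_mem _ hdA)
      (mem_image_of_mem _ hcA) (mem_image_of_mem _ hpA)
      (by simp [negP]; linarith) (by simp [negP]; linarith)
      (by simp [negP]; linarith) (by simp [negP]; linarith)
      (by simp [negP]; linarith) (by simp [negP]; linarith)
      (by simp [negP]; linarith) (by simp [negP]; linarith)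
    obtain ⟨z', ⟨z, hzA, rfl⟩, hz1, hz2, hz3, hz4⟩ := hres
    simp only [negP] at hz1 hz2 hz3 hz4
    exact ⟨z, hzA, by constructor; · linarith
                      constructor; · linarith
                      constructor; · linarith
                      · linarith⟩
  · push_neg at H1 H2
    obtain ⟨t₂, ht₂a, ht₂b, ht₂c, ht₂d⟩ := clamp (X := (α+δ)/2) hε hd1 ha1
    obtain ⟨k, hkA, hk1⟩ := ivt' hO.2.2 continuous_fst hdA haA ht₂a ht₂b
    have hk2 : (α-γ)/2 + (δ-γ)/2 + 2*ε < k.2 := H1 k hkA (by rw [hk1]; exact ht₂d)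
    obtain ⟨t₃, ht₃a, ht₃b, ht₃c, ht₃d⟩ := clamp (X := (β+γ)/2) hε hb1 hc1
    obtain ⟨l, hlA, hl1⟩ := ivt' hO.2.2 continuous_fst hbA hcA ht₃a ht₃b
    have hl2 : l.2 < (β-δ)/2 - (δ-γ)/2 - 2*ε := H2 l hlA (by rw [hl1]; exact ht₃c)
    have hOF := (hO.cut_x_ge' ((α+δ)/2 - ε)).cut_x_le' ((β+γ)/2 + ε)
    have hkF : k ∈ A ∩ {q | (α+δ)/2 - ε ≤ q.1} ∩ {q | q.1 ≤ (β+γ)/2 + ε} :=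
      ⟨⟨hkA, show _ ≤ k.1 by rw [hk1]; linarith⟩, show k.1 ≤ _ by rw [hk1]; linarith⟩
    have hlF : l ∈ A ∩ {q | (α+δ)/2 - ε ≤ q.1} ∩ {q | q.1 ≤ (β+γ)/2 + ε} :=
      ⟨⟨hlA, show _ ≤ l.1 by rw [hl1]; linarith⟩, show l.1 ≤ _ by rw [hl1]; linarith⟩
    have hvk : k.1 - k.2 ≤ γ := by rw [hk1] at *; linarith
    have hvl : γ ≤ l.1 - l.2 := by rw [hl1] at *; linarith
    obtain ⟨z, ⟨⟨hzA, hz1⟩, hz2⟩, hz3⟩ := ivt' hOF.2.2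
      (continuous_fst.sub continuous_snd) hkF hlF (c := γ)
      (le_trans (min_le_left _ _) hvk) (le_trans hvl (le_max_right _ _))
    simp only [mem_setOf_eq] at hz1 hz2
    simp only [Pi.sub_apply] at hz3
    exact ⟨z, hzA, by constructor; · linarith
                      constructor; · linarith
                      constructor; · linarith
                      · linarith⟩

lemma keyLemma {A : Set (ℝ×ℝ)} (hO : Ortho A) {α β γ δ ε : ℝ}
    (hαβ : α ≤ β) (hγδ : γ ≤ δ) (hε : 0 ≤ ε)
    {a b c d : ℝ×ℝ} (haA : a ∈ A) (hbA : b ∈ A) (hcA : c ∈ A) (hdA : d ∈ A)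
    (ha1 : (α+δ)/2 - ε ≤ a.1) (ha2 : (α-γ)/2 - ε ≤ a.2)
    (hb1 : b.1 ≤ (β+γ)/2 + ε) (hb2 : b.2 ≤ (β-δ)/2 + ε)
    (hc1 : (β+γ)/2 - ε ≤ c.1) (hc2 : c.2 ≤ (α-γ)/2 + ε)
    (hd1 : d.1 ≤ (α+δ)/2 + ε) (hd2 : (β-δ)/2 - ε ≤ d.2) :
    ∃ z ∈ A, α - 3*ε ≤ z.1 + z.2 ∧ z.1 + z.2 ≤ β + 3*ε ∧
      γ - 3*ε ≤ z.1 - z.2 ∧ z.1 - z.2 ≤ δ + 3*ε := by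
  rcases le_total (δ - γ) (β - α) with wide | tall
  · exact core hO hαβ hγδ hε wide haA hbA hcA hdA ha1 ha2 hb1 hb2 hc1 hc2 hd1 hd2
  · have hO' := hO.rot
    have hres := core (α := γ) (β := δ) (γ := -β) (δ := -α) (ε := ε) hO'
      hγδ (by linarith) hε (by linarith)
      (a := rotP c) (b := rotP d) (c := rotP b) (d := rotP a)
      (mem_image_of_mem _ hcA) (mem_image_of_mem _ hdA)
      (mem_image_of_mem _ hbA) (mem_image_of_mem _ haA)
      (by simp [rotP]; linarith) (by simp [rotP]; linarith)
      (by simp [rotP]; linarith) (by simp [rotP]; linarith)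
      (by simp [rotP]; linarith) (by simp [rotP]; linarith)
      (by simp [rotP]; linarith) (by simp [rotP]; linarith)
    obtain ⟨z', ⟨z, hzA, rfl⟩, hz1, hz2, hz3, hz4⟩ := hres
    simp only [rotP] at hz1 hz2 hz3 hz4
    exact ⟨z, hzA, by constructor; · linarith
                      constructor; · linarith
                      constructor; · linarith
                      · linarith⟩


end LInvProof

open LInvProof Filter Topology

/-- If `A` is an L-invariant subset of the Manhattan plane (path connected with
`L(A) = A`), then the closure of `A`, with the induced taxicab metric, is hyperconvex. -/
theorem closure_hyperconvex_of_LInvariant (A : Set (ℝ × ℝ)) (hA : IsPathConnected A)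
    (hL : doubleHatch A = A) :
    TaxiHyperconvexOn (closure A) := by
  intro I x r hx hr htri
  obtain ⟨p₀, hp₀, -⟩ := id hA
  have hYA : hatchY A ⊆ A := by
    intro p hp
    rw [← hL]
    exact ⟨p, hp, p, hp, rfl, rfl, le_refl _, le_refl _⟩
  have hXA : hatchX A ⊆ A := by
    intro p hp
    rw [← hL]
    obtain ⟨a, haA, b, hbA, h1, h2, h3, h4⟩ := hp
    exact ⟨a, ⟨a, haA, a, haA, rfl, rfl, le_refl _, le_refl _⟩,
      b, ⟨b, hbA, b, hbA, rfl, rfl, le_refl _, le_refl _⟩, h1, h2, h3, h4⟩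
  have hO : Ortho A := ⟨hXA, hYA, hA.isConnected.isPreconnected⟩
  cases isEmpty_or_nonempty I with
  | inl hI => exact ⟨p₀, subset_closure hp₀, fun i => (hI.elim i)⟩
  | inr hI =>
  have i₀ : I := hI.some
  have keyu : ∀ i j, ((x i).1 + (x i).2) - r i ≤ ((x j).1 + (x j).2) + r j := by
    intro i j
    have h := htri i j
    unfold taxiDist at h
    have h1 := le_abs_self ((x i).1 - (x j).1)
    have h2 := le_abs_self ((x i).2 - (x j).2)
    linarith
  have keyv : ∀ i j, ((x i).1 - (x i).2) - r i ≤ ((x j).1 - (x j).2) + r j := by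
    intro i j
    have h := htri i j
    unfold taxiDist at h
    have h1 := le_abs_self ((x i).1 - (x j).1)
    have h2 := neg_abs_le ((x i).2 - (x j).2)
    linarith
  have bddα : BddAbove (range fun i => ((x i).1 + (x i).2) - r i) :=
    ⟨((x i₀).1 + (x i₀).2) + r i₀, by rintro _ ⟨i, rfl⟩; exact keyu i i₀⟩
  have bddβ : BddBelow (range fun i => ((x i).1 + (x i).2) + r i) :=
    ⟨((x i₀).1 + (x i₀).2) - r i₀, by rintro _ ⟨j, rfl⟩; exact keyu i₀ j⟩
  have bddγ : BddAbove (range fun i => ((x i).1 - (x i).2) - r i) :=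
    ⟨((x i₀).1 - (x i₀).2) + r i₀, by rintro _ ⟨i, rfl⟩; exact keyv i i₀⟩
  have bddδ : BddBelow (range fun i => ((x i).1 - (x i).2) + r i) :=
    ⟨((x i₀).1 - (x i₀).2) - r i₀, by rintro _ ⟨j, rfl⟩; exact keyv i₀ j⟩
  set sα := ⨆ i, (((x i).1 + (x i).2) - r i) with hsα
  set sβ := ⨅ i, (((x i).1 + (x i).2) + r i) with hsβ
  set sγ := ⨆ i, (((x i).1 - (x i).2) - r i) with hsγ
  set sδ := ⨅ i, (((x i).1 - (x i).2) + r i) with hsδ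
  have hαβ : sα ≤ sβ := ciSup_le fun i => le_ciInf fun j => keyu i j
  have hγδ : sγ ≤ sδ := ciSup_le fun i => le_ciInf fun j => keyv i j
  have hsupu : ∀ i, ((x i).1 + (x i).2) - r i ≤ sα := fun i => le_ciSup bddα i
  have hinfu : ∀ i, sβ ≤ ((x i).1 + (x i).2) + r i := fun i => ciInf_le bddβ i
  have hsupv : ∀ i, ((x i).1 - (x i).2) - r i ≤ sγ := fun i => le_ciSup bddγ i
  have hinfv : ∀ i, sδ ≤ ((x i).1 - (x i).2) + r i := fun i => ciInf_le bddδ i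
  have mainstep : ∀ ε : ℝ, 0 < ε → ∃ z ∈ A,
      sα - 6*ε ≤ z.1 + z.2 ∧ z.1 + z.2 ≤ sβ + 6*ε ∧
      sγ - 6*ε ≤ z.1 - z.2 ∧ z.1 - z.2 ≤ sδ + 6*ε := by
    intro ε hε
    obtain ⟨i₁, hi₁⟩ := exists_lt_of_lt_ciSup (show sα - ε < sα by linarith)
    obtain ⟨i₂, hi₂⟩ := exists_lt_of_ciInf_lt (show sβ < sβ + ε by linarith)
    obtain ⟨i₃, hi₃⟩ := exists_lt_of_lt_ciSup (show sγ - ε < sγ by linarith)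
    obtain ⟨i₄, hi₄⟩ := exists_lt_of_ciInf_lt (show sδ < sδ + ε by linarith)
    obtain ⟨a, haA, hda⟩ := Metric.mem_closure_iff.mp (hx i₁) ε hε
    obtain ⟨b, hbA, hdb⟩ := Metric.mem_closure_iff.mp (hx i₂) ε hε
    obtain ⟨c, hcA, hdc⟩ := Metric.mem_closure_iff.mp (hx i₃) ε hε
    obtain ⟨d, hdA, hdd⟩ := Metric.mem_closure_iff.mp (hx i₄) ε hε
    rw [Prod.dist_eq, max_lt_iff, Real.dist_eq, Real.dist_eq] at hda hdb hdc hdd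
    obtain ⟨ha1', ha2'⟩ := hda
    obtain ⟨hb1', hb2'⟩ := hdb
    obtain ⟨hc1', hc2'⟩ := hdc
    obtain ⟨hd1', hd2'⟩ := hdd
    rw [abs_lt] at ha1' ha2' hb1' hb2' hc1' hc2' hd1' hd2'
    have hA1 := hsupv i₁; have hA2 := hinfv i₁
    have hB1 := hsupv i₂; have hB2 := hinfv i₂
    have hC1 := hsupu i₃; have hC2 := hinfu i₃
    have hD1 := hsupu i₄; have hD2 := hinfu i₄
    obtain ⟨z, hzA, hz1, hz2, hz3, hz4⟩ := keyLemma (ε := 2*ε) hO hαβ hγδ (by linarith)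
      haA hbA hcA hdA
      (by obtain ⟨h, _⟩ := ha1'; linarith) (by obtain ⟨h, _⟩ := ha2'; linarith)
      (by obtain ⟨_, h⟩ := hb1'; linarith) (by obtain ⟨_, h⟩ := hb2'; linarith)
      (by obtain ⟨h, _⟩ := hc1'; linarith) (by obtain ⟨_, h⟩ := hc2'; linarith)
      (by obtain ⟨_, h⟩ := hd1'; linarith) (by obtain ⟨h, _⟩ := hd2'; linarith)
    exact ⟨z, hzA, by linarith, by linarith, by linarith, by linarith⟩
  have hseq : ∀ n : ℕ, ∃ z ∈ A,
      sα - 6*(1/(n+1)) ≤ z.1 + z.2 ∧ z.1 + z.2 ≤ sβ + 6*(1/(n+1)) ∧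
      sγ - 6*(1/(n+1)) ≤ z.1 - z.2 ∧ z.1 - z.2 ≤ sδ + 6*(1/(n+1)) :=
    fun n => mainstep (1/(n+1)) (by positivity)
  choose z hzA hz using hseq
  have hmem : ∀ n : ℕ, z n ∈ Icc ((sα+sγ)/2 - 6) ((sβ+sδ)/2 + 6) ×ˢ
      Icc ((sα-sδ)/2 - 6) ((sβ-sγ)/2 + 6) := by
    intro n
    have hn : (1:ℝ)/(n+1) ≤ 1 := by
      rw [div_le_one (by positivity)]
      have : (0:ℝ) ≤ (n:ℝ) := Nat.cast_nonneg n
      linarith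
    have hnp : (0:ℝ) < 1/(n+1) := by positivity
    obtain ⟨h1, h2, h3, h4⟩ := hz n
    exact Set.mem_prod.mpr ⟨⟨by linarith, by linarith⟩, ⟨by linarith, by linarith⟩⟩
  obtain ⟨y, hyK, φ, hφ, hφt⟩ := (isCompact_Icc.prod isCompact_Icc).tendsto_subseq hmem
  refine ⟨y, mem_closure_of_tendsto hφt (Eventually.of_forall fun n => hzA (φ n)), ?_⟩
  have hcmp : ∀ n : ℕ, (1:ℝ)/(φ n + 1) ≤ 1/(n+1) := by
    intro n
    apply one_div_le_one_div_of_le (by positivity)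
    have h : n ≤ φ n := hφ.le_apply
    have : (n:ℝ) ≤ (φ n : ℝ) := by exact_mod_cast h
    linarith
  have hul : Tendsto (fun n => (z (φ n)).1 + (z (φ n)).2) atTop (𝓝 (y.1 + y.2)) :=
    ((continuous_fst.add continuous_snd).tendsto y).comp hφt
  have hvl : Tendsto (fun n => (z (φ n)).1 - (z (φ n)).2) atTop (𝓝 (y.1 - y.2)) :=
    ((continuous_fst.sub continuous_snd).tendsto y).comp hφt
  have h0 : Tendsto (fun n : ℕ => (1:ℝ)/(n+1)) atTop (𝓝 0) :=
    tendsto_one_div_add_atTop_nhds_zero_nat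
  have hblo : ∀ cst : ℝ, Tendsto (fun n : ℕ => cst - 6*(1/(n+1:ℝ))) atTop (𝓝 cst) := by
    intro cst
    have h1 : Tendsto (fun n : ℕ => cst - 6*(1/(n+1:ℝ))) atTop (𝓝 (cst - 6*0)) :=
      Tendsto.sub tendsto_const_nhds (h0.const_mul 6)
    simpa using h1
  have hbhi : ∀ cst : ℝ, Tendsto (fun n : ℕ => cst + 6*(1/(n+1:ℝ))) atTop (𝓝 cst) := by
    intro cst
    have h1 : Tendsto (fun n : ℕ => cst + 6*(1/(n+1:ℝ))) atTop (𝓝 (cst + 6*0)) :=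
      Tendsto.add tendsto_const_nhds (h0.const_mul 6)
    simpa using h1
  have hy1 : sα ≤ y.1 + y.2 := by
    refine le_of_tendsto_of_tendsto' (hblo sα) hul fun n => ?_
    have h := (hz (φ n)).1
    have h' := hcmp n
    linarith
  have hy2 : y.1 + y.2 ≤ sβ := by
    refine le_of_tendsto_of_tendsto' hul (hbhi sβ) fun n => ?_
    have h := (hz (φ n)).2.1
    have h' := hcmp n
    linarith
  have hy3 : sγ ≤ y.1 - y.2 := by
    refine le_of_tendsto_of_tendsto' (hblo sγ) hvl fun n => ?_
    have h := (hz (φ n)).2.2.1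
    have h' := hcmp n
    linarith
  have hy4 : y.1 - y.2 ≤ sδ := by
    refine le_of_tendsto_of_tendsto' hvl (hbhi sδ) fun n => ?_
    have h := (hz (φ n)).2.2.2
    have h' := hcmp n
    linarith
  intro i
  have h1 := hsupu i
  have h2 := hinfu i
  have h3 := hsupv i
  have h4 := hinfv i
  unfold taxiDist
  rcases abs_cases ((x i).1 - y.1) with ⟨ea, _⟩ | ⟨ea, _⟩ <;>
    rcases abs_cases ((x i).2 - y.2) with ⟨eb, _⟩ | ⟨eb, _⟩ <;>
    rw [ea, eb] <;> linarith
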